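/- arXiv:2512.15352 — 12 statements merged into one kernel-verified Lean document; each statement's English description precedes it below -/
import Mathlib

section
/- Let H be a complex inner product space, let k and k⊥ be orthonormal vectors in H, let θ ∈ ℝ, and let ψ = cos θ • k + sin θ • k⊥. Let Q = V_ψ ∘ V_k be the Grover operator, where V_k = id − 2 P_k and V_ψ = id − 2 P_ψ. Then for every α ∈ ℝ, Q (cos α • k + sin α • k⊥) = cos(α + 2θ) • k + sin(α + 2θ) • k⊥. -/
open scoped ComplexInnerProductSpace

/-- Grover rotation: one application of `Q = V_ψ ∘ V_k` rotates a state in the plane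
spanned by the orthonormal pair `k, k⊥` by angle `2θ`, where
`ψ = cos θ • k + sin θ • k⊥`. -/
theorem grover_rotation
    {H : Type*} [NormedAddCommGroup H] [InnerProductSpace ℂ H]
    (k kp : H) (hk : ‖k‖ = 1) (hkp : ‖kp‖ = 1) (hortho : ⟪k, kp⟫ = 0)
    (θ : ℝ) (ψ : H)
    (hψ : ψ = (Real.cos θ : ℂ) • k + (Real.sin θ : ℂ) • kp)
    (Pk Pψ Vk Vψ Q : H → H)
    (hPk : ∀ x, Pk x = ⟪k, x⟫ • k)
    (hPψ : ∀ x, Pψ x = ⟪ψ, x⟫ • ψ)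
    (hVk : ∀ x, Vk x = x - (2 : ℂ) • Pk x)
    (hVψ : ∀ x, Vψ x = x - (2 : ℂ) • Pψ x)
    (hQ : Q = Vψ ∘ Vk) (α : ℝ) :
    Q ((Real.cos α : ℂ) • k + (Real.sin α : ℂ) • kp)
      = (Real.cos (α + 2 * θ) : ℂ) • k + (Real.sin (α + 2 * θ) : ℂ) • kp := by
  have hkk : ⟪k, k⟫ = (1 : ℂ) := by
    rw [inner_self_eq_norm_sq_to_K, hk]; norm_num
  have hkpkp : ⟪kp, kp⟫ = (1 : ℂ) := by
    rw [inner_self_eq_norm_sq_to_K, hkp]; norm_num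
  have hortho' : ⟪kp, k⟫ = (0 : ℂ) := by
    rw [← inner_conj_symm, hortho, map_zero]
  simp only [hQ, Function.comp, hVk, hVψ, hPk, hPψ, hψ, inner_add_right,
    inner_smul_right, inner_add_left, inner_smul_left, inner_sub_right,
    Complex.conj_ofReal, hkk, hkpkp, hortho, hortho', smul_add, smul_smul,
    smul_sub, sub_smul, add_smul]
  rw [Real.cos_add, Real.sin_add, Real.cos_two_mul, Real.sin_two_mul]
  match_scalars
  · ring
  · linear_combination (-2 * Complex.sin (α : ℂ)) * Complex.sin_sq_add_cos_sq (θ : ℂ)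
end

section
/- Let H be a complex inner product space, let k and k⊥ be orthonormal vectors in H, let θ ∈ ℝ, and let ψ = cos θ • k + sin θ • k⊥. Let Q = V_ψ ∘ V_k be the Grover operator, where V_k = id − 2 P_k and V_ψ = id − 2 P_ψ. Then for every natural number m, the m-fold iterate satisfies Q^m ψ = cos((2m+1)θ) • k + sin((2m+1)θ) • k⊥. -/
open scoped ComplexInnerProductSpace

/-- `m` iterations of the Grover operator `Q = V_ψ ∘ V_k` applied to
`ψ = cos θ • k + sin θ • k⊥` yield `cos((2m+1)θ) • k + sin((2m+1)θ) • k⊥`. -/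
theorem grover_iterate
    {H : Type*} [NormedAddCommGroup H] [InnerProductSpace ℂ H]
    (k kp : H) (hk : ‖k‖ = 1) (hkp : ‖kp‖ = 1) (hortho : ⟪k, kp⟫ = 0)
    (θ : ℝ) (ψ : H)
    (hψ : ψ = (Real.cos θ : ℂ) • k + (Real.sin θ : ℂ) • kp)
    (Pk Pψ Vk Vψ Q : H → H)
    (hPk : ∀ x, Pk x = ⟪k, x⟫ • k)
    (hPψ : ∀ x, Pψ x = ⟪ψ, x⟫ • ψ)
    (hVk : ∀ x, Vk x = x - (2 : ℂ) • Pk x)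
    (hVψ : ∀ x, Vψ x = x - (2 : ℂ) • Pψ x)
    (hQ : Q = Vψ ∘ Vk) (m : ℕ) :
    Q^[m] ψ = (Real.cos ((2 * m + 1) * θ) : ℂ) • k
      + (Real.sin ((2 * m + 1) * θ) : ℂ) • kp := by
  have hkk : ⟪k, k⟫ = (1 : ℂ) := by
    rw [inner_self_eq_norm_sq_to_K, hk]; norm_num
  have hpp : ⟪kp, kp⟫ = (1 : ℂ) := by
    rw [inner_self_eq_norm_sq_to_K, hkp]; norm_num
  have hpk : ⟪kp, k⟫ = 0 := by
    rw [← inner_conj_symm, hortho, map_zero]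
  have h1 : Complex.cos θ ^ 2 + Complex.sin θ ^ 2 = 1 := Complex.cos_sq_add_sin_sq θ
  have key : ∀ α : ℝ, Q ((Real.cos α : ℂ) • k + (Real.sin α : ℂ) • kp)
      = (Real.cos (α + 2 * θ) : ℂ) • k + (Real.sin (α + 2 * θ) : ℂ) • kp := by
    intro α
    simp only [hQ, Function.comp_apply, hVk, hVψ, hPk, hPψ, hψ,
      inner_add_right, inner_sub_right, inner_smul_right, inner_add_left, inner_smul_left,
      hkk, hpp, hpk, hortho, map_ofNat, Complex.conj_ofReal,
      smul_add, smul_smul, smul_sub, mul_zero, mul_one, zero_mul, add_zero, zero_add]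
    rw [Real.cos_add, Real.sin_add, Real.cos_two_mul, Real.sin_two_mul]
    match_scalars
    · push_cast; ring
    · push_cast; linear_combination (-2 * Complex.sin ↑α) * h1
  induction m with
  | zero =>
    simpa using hψ
  | succ n ih =>
    rw [Function.iterate_succ_apply', ih, key]
    congr 2 <;> push_cast <;> ring_nf
end

section
/- Let H be a complex inner product space, let k and k⊥ be orthonormal vectors in H, let θ ∈ ℝ, and let ψ = cos θ • k + sin θ • k⊥. Let Q = V_ψ ∘ V_k be the Grover operator, where V_k = id − 2 P_k and V_ψ = id − 2 P_ψ. Then for every natural number m, the probability of detecting coherence after m Grover iterations satisfies ‖(id − P_k)(Q^m ψ)‖² = sin²((2m+1)θ). -/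
open scoped ComplexInnerProductSpace

/-- The probability of detecting coherence after `m` Grover iterations, i.e. the
squared norm of the component of `Q^[m] ψ` orthogonal to `k`, equals `sin²((2m+1)θ)`. -/
theorem grover_detection_probability
    {H : Type*} [NormedAddCommGroup H] [InnerProductSpace ℂ H]
    (k kp : H) (hk : ‖k‖ = 1) (hkp : ‖kp‖ = 1) (hortho : ⟪k, kp⟫ = 0)
    (θ : ℝ) (ψ : H)
    (hψ : ψ = (Real.cos θ : ℂ) • k + (Real.sin θ : ℂ) • kp)
    (Pk Pψ Vk Vψ Q : H → H)
    (hPk : ∀ x, Pk x = ⟪k, x⟫ • k)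
    (hPψ : ∀ x, Pψ x = ⟪ψ, x⟫ • ψ)
    (hVk : ∀ x, Vk x = x - (2 : ℂ) • Pk x)
    (hVψ : ∀ x, Vψ x = x - (2 : ℂ) • Pψ x)
    (hQ : Q = Vψ ∘ Vk) (m : ℕ) :
    ‖Q^[m] ψ - Pk (Q^[m] ψ)‖ ^ 2 = Real.sin ((2 * m + 1) * θ) ^ 2 := by
  have hkk : ⟪k, k⟫ = 1 := by
    rw [inner_self_eq_norm_sq_to_K, hk]; norm_num
  have hpp : ⟪kp, kp⟫ = 1 := by
    rw [inner_self_eq_norm_sq_to_K, hkp]; norm_num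
  have hpk : ⟪kp, k⟫ = 0 := by
    rw [← inner_conj_symm, hortho, map_zero]
  have key : ∀ n : ℕ, Q^[n] ψ =
      (Real.cos ((2 * n + 1) * θ) : ℂ) • k + (Real.sin ((2 * n + 1) * θ) : ℂ) • kp := by
    intro n
    induction n with
    | zero => simpa using hψ
    | succ n ih =>
      rw [Function.iterate_succ_apply', ih, hQ]
      have harg : (2 * (n + 1 : ℕ) + 1) * θ = (2 * n + 1) * θ + 2 * θ := by
        push_cast; ring
      have hcos : Real.cos ((2 * (n + 1 : ℕ) + 1) * θ)
          = Real.cos ((2 * n + 1) * θ) * (2 * Real.cos θ ^ 2 - 1)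
            - Real.sin ((2 * n + 1) * θ) * (2 * Real.sin θ * Real.cos θ) := by
        rw [harg, Real.cos_add, Real.cos_two_mul, Real.sin_two_mul]
      have hsin : Real.sin ((2 * (n + 1 : ℕ) + 1) * θ)
          = Real.sin ((2 * n + 1) * θ) * (1 - 2 * Real.sin θ ^ 2)
            + Real.cos ((2 * n + 1) * θ) * (2 * Real.sin θ * Real.cos θ) := by
        rw [harg, Real.sin_add, Real.cos_two_mul, Real.sin_two_mul]
        linear_combination 2 * Real.sin ((2 * n + 1) * θ) * Real.sin_sq_add_cos_sq θ
      rw [hcos, hsin]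
      simp only [Function.comp_apply, hVψ, hVk, hPk, hPψ, hψ,
        inner_add_right, inner_smul_right, inner_add_left, inner_smul_left,
        inner_sub_right, hkk, hortho, hpk, hpp, Complex.conj_ofReal]
      push_cast
      module
  rw [key m, hPk]
  have h1 : ⟪k, (Real.cos ((2 * m + 1) * θ) : ℂ) • k
      + (Real.sin ((2 * m + 1) * θ) : ℂ) • kp⟫ = (Real.cos ((2 * m + 1) * θ) : ℂ) := by
    simp [inner_add_right, inner_smul_right, hkk, hortho, hk]
  rw [h1]
  have h2 : (Real.cos ((2 * m + 1) * θ) : ℂ) • k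
      + (Real.sin ((2 * m + 1) * θ) : ℂ) • kp
      - (Real.cos ((2 * m + 1) * θ) : ℂ) • k
      = (Real.sin ((2 * m + 1) * θ) : ℂ) • kp := by abel
  rw [h2, norm_smul, hkp, mul_one, Complex.norm_real, Real.norm_eq_abs, sq_abs]
end

section
/- Let θ be a real number with 0 < θ ≤ π/4 and set m = ⌊π/(4θ) − 1/2⌋ (the floor, a natural number). Then sin²((2m+1)θ) ≥ cos²(2θ). -/
/-- Choosing `m = ⌊π/(4θ) − 1/2⌋` Grover iterations makes the success probability
`sin²((2m+1)θ)` at least `cos²(2θ)`. -/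
theorem grover_optimal_iterations (θ : ℝ) (hθ : 0 < θ) (hθ' : θ ≤ Real.pi / 4)
    (m : ℕ) (hm : m = ⌊Real.pi / (4 * θ) - 1 / 2⌋₊) :
    Real.sin ((2 * m + 1) * θ) ^ 2 ≥ Real.cos (2 * θ) ^ 2 := by
  set x : ℝ := Real.pi / (4 * θ) - 1 / 2 with hx
  have h4θ : (0:ℝ) < 4 * θ := by linarith
  have hx0 : 0 ≤ x := by
    have : (1:ℝ) ≤ Real.pi / (4 * θ) := (one_le_div h4θ).mpr (by linarith)
    rw [hx]; linarith
  have hfl : (m : ℝ) ≤ x := by rw [hm]; exact Nat.floor_le hx0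
  have hfl' : x < m + 1 := by rw [hm]; exact Nat.lt_floor_add_one x
  -- upper bound
  have hub : (2 * m + 1) * θ ≤ Real.pi / 2 := by
    have h1 : (2 * (m:ℝ) + 1) ≤ Real.pi / (2 * θ) := by
      have : Real.pi / (2 * θ) = 2 * x + 1 := by
        rw [hx]; field_simp; ring
      rw [this]; linarith
    have := mul_le_mul_of_nonneg_right h1 hθ.le
    calc (2 * m + 1) * θ = (2 * (m:ℝ) + 1) * θ := by push_cast; ring
      _ ≤ Real.pi / (2 * θ) * θ := this
      _ = Real.pi / 2 := by field_simp
  -- lower bound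
  have hlb : Real.pi / 2 - 2 * θ ≤ (2 * m + 1) * θ := by
    have h1 : Real.pi / (2 * θ) - 2 ≤ (2 * (m:ℝ) + 1) := by
      have : Real.pi / (2 * θ) = 2 * x + 1 := by
        rw [hx]; field_simp; ring
      rw [this]; linarith
    have := mul_le_mul_of_nonneg_right h1 hθ.le
    calc Real.pi / 2 - 2 * θ = (Real.pi / (2 * θ) - 2) * θ := by field_simp
      _ ≤ (2 * (m:ℝ) + 1) * θ := this
      _ = (2 * m + 1) * θ := by push_cast; ring
  have hπ : 0 < Real.pi := Real.pi_pos
  have hsin : Real.cos (2 * θ) ≤ Real.sin ((2 * m + 1) * θ) := by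
    rw [← Real.sin_pi_div_two_sub (2 * θ)]
    apply Real.strictMonoOn_sin.monotoneOn
    · constructor <;> [linarith; linarith]
    · have h0 : 0 ≤ (2 * (m:ℝ) + 1) * θ := by positivity
      constructor <;> linarith
    · exact hlb
  have hcos0 : 0 ≤ Real.cos (2 * θ) := by
    apply Real.cos_nonneg_of_mem_Icc
    constructor <;> linarith
  exact pow_le_pow_left₀ hcos0 hsin 2
end

section
/- Let θ be a real number with 0 < θ < π/2 and let M be a positive natural number satisfying M ≥ 1/sin(2θ). Then the average success probability satisfies (1/M) · ∑_{j=0}^{M−1} sin²((2j+1)θ) ≥ 1/4. -/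
lemma cos_sum_aux (θ : ℝ) (M : ℕ) :
    ∑ j ∈ Finset.range M, 2 * Real.sin (2 * θ) * Real.cos ((4 * j + 2) * θ)
      = Real.sin (4 * M * θ) := by
  induction M with
  | zero => simp
  | succ n ih =>
    rw [Finset.sum_range_succ, ih]
    have h1 : (4 * ((n : ℝ) + 1)) * θ = ((4 * n + 2) * θ) + 2 * θ := by ring
    have h2 : (4 * (n : ℝ)) * θ = ((4 * n + 2) * θ) - 2 * θ := by ring
    push_cast
    rw [h1, h2, Real.sin_add, Real.sin_sub]
    ring

/-- If `M ≥ 1/sin(2θ)`, the average success probability of amplitude amplification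
with a uniformly random number of Grover iterations `j ∈ {0, …, M−1}` is at least `1/4`. -/
theorem average_success_probability_ge_quarter (θ : ℝ) (hθ : 0 < θ) (hθ' : θ < Real.pi / 2)
    (M : ℕ) (hM : 0 < M) (hM' : (M : ℝ) ≥ 1 / Real.sin (2 * θ)) :
    (1 / (M : ℝ)) * ∑ j ∈ Finset.range M, Real.sin ((2 * j + 1) * θ) ^ 2 ≥ 1 / 4 := by
  have hs : 0 < Real.sin (2 * θ) := by
    apply Real.sin_pos_of_pos_of_lt_pi <;> nlinarith
  have hMs : (M : ℝ) * Real.sin (2 * θ) ≥ 1 := by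
    rw [ge_iff_le, div_le_iff₀ hs] at hM'
    linarith
  have hMpos : (0 : ℝ) < M := by exact_mod_cast hM
  have hkey := cos_sum_aux θ M
  have expand : ∀ j ∈ Finset.range M,
      Real.sin ((2 * j + 1) * θ) ^ 2
        = 1 / 2 - (1 / (4 * Real.sin (2 * θ)))
            * (2 * Real.sin (2 * θ) * Real.cos ((4 * j + 2) * θ)) := by
    intro j _
    rw [Real.sin_sq_eq_half_sub]
    have h2 : (2 : ℝ) * ((2 * j + 1) * θ) = (4 * j + 2) * θ := by ring
    rw [h2]
    field_simp
    ring
  have hsum : ∑ j ∈ Finset.range M, Real.sin ((2 * j + 1) * θ) ^ 2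
      = M / 2 - Real.sin (4 * M * θ) / (4 * Real.sin (2 * θ)) := by
    rw [Finset.sum_congr rfl expand, Finset.sum_sub_distrib, ← Finset.mul_sum, hkey]
    rw [Finset.sum_const, Finset.card_range]
    ring
  rw [hsum]
  have hb : Real.sin (4 * M * θ) ≤ 1 := Real.sin_le_one _
  have h4s : (0 : ℝ) < 4 * Real.sin (2 * θ) := by linarith
  have key : Real.sin (4 * M * θ) / (4 * Real.sin (2 * θ)) ≤ M / 4 := by
    rw [div_le_div_iff₀ h4s (by norm_num)]
    nlinarith
  rw [ge_iff_le, div_mul_eq_mul_div, one_mul, le_div_iff₀ hMpos]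
  linarith
end

section
/- Let H be a complex Hilbert space, let ψ and φ be unit vectors in H, and let E : H → H be a continuous linear self-adjoint operator satisfying 0 ≤ re⟨x, E x⟩ ≤ ‖x‖² for all x ∈ H. Then re⟨ψ, E ψ⟩ − re⟨φ, E φ⟩ ≤ √(1 − |⟨ψ, φ⟩|²). -/
open scoped ComplexInnerProductSpace

-- Cauchy–Schwarz for a positive self-adjoint operator, real-part version.
lemma cs_pos {H : Type*} [NormedAddCommGroup H] [InnerProductSpace ℂ H] [CompleteSpace H]
    (E : H →L[ℂ] H) (hE : IsSelfAdjoint E)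
    (hE0 : ∀ x : H, 0 ≤ (⟪x, E x⟫).re) (u v : H) :
    (⟪u, E v⟫).re ^ 2 ≤ (⟪u, E u⟫).re * (⟪v, E v⟫).re := by
  have hsym : ∀ x y : H, (⟪x, E y⟫).re = (⟪y, E x⟫).re := by
    intro x y
    have h1 : ⟪x, E y⟫ = ⟪E x, y⟫ := by
      conv_lhs => rw [← hE.adjoint_eq]
      exact ContinuousLinearMap.adjoint_inner_right E x y
    rw [h1]
    exact inner_re_symm (𝕜 := ℂ) (E x) y
  have key : ∀ t : ℝ, 0 ≤ (⟪u, E u⟫).re * (t * t) + (2 * (⟪u, E v⟫).re) * t + (⟪v, E v⟫).re := by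
    intro t
    have h := hE0 ((t : ℂ) • u + v)
    have : (⟪(t:ℂ) • u + v, E ((t:ℂ) • u + v)⟫).re
        = (⟪u, E u⟫).re * (t * t) + (2 * (⟪u, E v⟫).re) * t + (⟪v, E v⟫).re := by
      simp only [map_add, map_smul, inner_add_add_self, inner_smul_left, inner_smul_right,
        inner_add_left, inner_add_right]
      simp [Complex.add_re, Complex.mul_re, hsym u v]
      ring
    linarith [this ▸ h]
  have hd := discrim_le_zero key
  rw [discrim] at hd
  nlinarith [hd]

lemma helstrom_core {H : Type*} [NormedAddCommGroup H] [InnerProductSpace ℂ H] [CompleteSpace H]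
    (ψ φ : H) (hψ : ‖ψ‖ = 1) (hφ : ‖φ‖ = 1)
    (E : H →L[ℂ] H) (hE : IsSelfAdjoint E)
    (hE0 : ∀ x : H, 0 ≤ (⟪x, E x⟫).re)
    (hE1 : ∀ x : H, (⟪x, E x⟫).re ≤ ‖x‖ ^ 2)
    (him : (⟪ψ, φ⟫).im = 0) :
    (⟪ψ, E ψ⟫).re - (⟪φ, E φ⟫).re ≤ Real.sqrt (1 - ‖⟪ψ, φ⟫‖ ^ 2) := by
  have hself : ∀ x : H, (⟪x, x⟫ : ℂ).re = ‖x‖ ^ 2 := fun x => by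
    simpa using inner_self_eq_norm_sq (𝕜 := ℂ) x
  have hresym : ∀ x y : H, (⟪x, y⟫ : ℂ).re = (⟪y, x⟫ : ℂ).re := fun x y => by
    simpa using inner_re_symm (𝕜 := ℂ) x y
  set u := ψ + φ with hu
  set v := ψ - φ with hv
  have hsym : ∀ x y : H, (⟪x, E y⟫).re = (⟪y, E x⟫).re := by
    intro x y
    have h1 : ⟪x, E y⟫ = ⟪E x, y⟫ := by
      conv_lhs => rw [← hE.adjoint_eq]
      exact ContinuousLinearMap.adjoint_inner_right E x y
    rw [h1]; exact hresym (E x) y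
  set b : ℝ := (⟪u, E v⟫).re with hb
  have hbias : b = (⟪ψ, E ψ⟫).re - (⟪φ, E φ⟫).re := by
    rw [hb, hu, hv]
    simp only [map_sub, inner_add_left, inner_sub_right, Complex.sub_re, Complex.add_re]
    rw [hsym φ ψ]; ring
  set F : H →L[ℂ] H := 1 - E with hF
  have hFsa : IsSelfAdjoint F := by
    have h1 : IsSelfAdjoint (1 : H →L[ℂ] H) := by
      rw [IsSelfAdjoint]; simp
    exact h1.sub hE
  have hFapp : ∀ x : H, F x = x - E x := fun x => by
    rw [hF]; simp
  have hFre : ∀ x : H, (⟪x, F x⟫).re = ‖x‖ ^ 2 - (⟪x, E x⟫).re := by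
    intro x
    rw [hFapp, inner_sub_right, Complex.sub_re, hself]
  have hF0 : ∀ x : H, 0 ≤ (⟪x, F x⟫).re := fun x => by
    rw [hFre]; linarith [hE1 x]
  have huv : (⟪u, v⟫).re = 0 := by
    rw [hu, hv]
    simp only [inner_add_left, inner_sub_right, Complex.add_re, Complex.sub_re]
    rw [hresym φ ψ, hself, hself, hψ, hφ]; ring
  have hbF : b = -(⟪u, F v⟫).re := by
    rw [hb]
    have h3 : (⟪u, F v⟫).re = (⟪u, v⟫).re - (⟪u, E v⟫).re := by
      rw [hFapp, inner_sub_right, Complex.sub_re]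
    rw [h3, huv]; ring
  obtain ⟨P, hP⟩ : ∃ P, P = (⟪u, E u⟫).re := ⟨_, rfl⟩
  obtain ⟨Q, hQ⟩ : ∃ Q, Q = (⟪v, E v⟫).re := ⟨_, rfl⟩
  obtain ⟨P', hP'⟩ : ∃ P', P' = (⟪u, F u⟫).re := ⟨_, rfl⟩
  obtain ⟨Q', hQ'⟩ : ∃ Q', Q' = (⟪v, F v⟫).re := ⟨_, rfl⟩
  have h1 : b ^ 2 ≤ P * Q := by rw [hP, hQ]; exact cs_pos E hE hE0 u v
  have h2 : b ^ 2 ≤ P' * Q' := by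
    have h := cs_pos F hFsa hF0 u v
    rw [hP', hQ', hbF]
    calc (-(⟪u, F v⟫).re) ^ 2 = (⟪u, F v⟫).re ^ 2 := by ring
      _ ≤ _ := h
  have hP0 : 0 ≤ P := hP ▸ hE0 u
  have hQ0 : 0 ≤ Q := hQ ▸ hE0 v
  have hP'0 : 0 ≤ P' := hP' ▸ hF0 u
  have hQ'0 : 0 ≤ Q' := hQ' ▸ hF0 v
  have hPsum : P + P' = ‖u‖ ^ 2 := by rw [hP, hP', hFre]; ring
  have hQsum : Q + Q' = ‖v‖ ^ 2 := by rw [hQ, hQ', hFre]; ring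
  have hQu : P * P' ≤ (‖u‖ ^ 2 / 2) ^ 2 := by nlinarith [sq_nonneg (P - P')]
  have hQv : Q * Q' ≤ (‖v‖ ^ 2 / 2) ^ 2 := by nlinarith [sq_nonneg (Q - Q')]
  have hb4 : b ^ 4 ≤ (‖u‖ ^ 2 / 2) ^ 2 * (‖v‖ ^ 2 / 2) ^ 2 :=
    calc b ^ 4 = b ^ 2 * b ^ 2 := by ring
      _ ≤ (P * Q) * (P' * Q') := mul_le_mul h1 h2 (sq_nonneg b) (mul_nonneg hP0 hQ0)
      _ = (P * P') * (Q * Q') := by ring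
      _ ≤ (‖u‖ ^ 2 / 2) ^ 2 * (‖v‖ ^ 2 / 2) ^ 2 :=
        mul_le_mul hQu hQv (mul_nonneg hQ0 hQ'0) (sq_nonneg _)
  have hX0 : 0 ≤ ‖u‖ ^ 2 / 2 * (‖v‖ ^ 2 / 2) := by positivity
  have hb2 : b ^ 2 ≤ ‖u‖ ^ 2 / 2 * (‖v‖ ^ 2 / 2) := by
    have h4 : (b ^ 2) ^ 2 ≤ (‖u‖ ^ 2 / 2 * (‖v‖ ^ 2 / 2)) ^ 2 := by
      calc (b ^ 2) ^ 2 = b ^ 4 := by ring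
        _ ≤ (‖u‖ ^ 2 / 2) ^ 2 * (‖v‖ ^ 2 / 2) ^ 2 := hb4
        _ = (‖u‖ ^ 2 / 2 * (‖v‖ ^ 2 / 2)) ^ 2 := by ring
    have h5 := Real.sqrt_le_sqrt h4
    rwa [Real.sqrt_sq (sq_nonneg b), Real.sqrt_sq hX0] at h5
  set r : ℝ := (⟪ψ, φ⟫).re with hr
  have hnu : ‖u‖ ^ 2 = 2 + 2 * r := by
    rw [← hself u, hu]
    simp only [inner_add_add_self, Complex.add_re]
    rw [hresym φ ψ, hself, hself, hψ, hφ, hr]; ring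
  have hnv : ‖v‖ ^ 2 = 2 - 2 * r := by
    rw [← hself v, hv]
    simp only [inner_sub_sub_self, Complex.sub_re, Complex.add_re]
    rw [hresym φ ψ, hself, hself, hψ, hφ, hr]; ring
  have hnorm2 : ‖⟪ψ, φ⟫‖ ^ 2 = r ^ 2 := by
    rw [Complex.sq_norm, Complex.normSq_apply, him, hr]; ring
  have hfin : b ^ 2 ≤ 1 - ‖⟪ψ, φ⟫‖ ^ 2 := by
    rw [hnorm2]; rw [hnu, hnv] at hb2
    have he : (2 + 2 * r) / 2 * ((2 - 2 * r) / 2) = 1 - r ^ 2 := by ring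
    linarith [he ▸ hb2]
  rw [← hbias]
  rcases le_or_gt b 0 with hb0 | hb0
  · exact hb0.trans (Real.sqrt_nonneg _)
  · exact (Real.le_sqrt hb0.le ((sq_nonneg b).trans hfin)).mpr hfin

/-- Helstrom-type bound: for any measurement effect `0 ≤ E ≤ 1`, the bias at
distinguishing the unit vectors `ψ` and `φ` is at most `√(1 − |⟨ψ, φ⟩|²)`. -/
theorem helstrom_bias_bound
    {H : Type*} [NormedAddCommGroup H] [InnerProductSpace ℂ H] [CompleteSpace H]
    (ψ φ : H) (hψ : ‖ψ‖ = 1) (hφ : ‖φ‖ = 1)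
    (E : H →L[ℂ] H) (hE : IsSelfAdjoint E)
    (hE0 : ∀ x : H, 0 ≤ (⟪x, E x⟫).re)
    (hE1 : ∀ x : H, (⟪x, E x⟫).re ≤ ‖x‖ ^ 2) :
    (⟪ψ, E ψ⟫).re - (⟪φ, E φ⟫).re ≤ Real.sqrt (1 - ‖⟪ψ, φ⟫‖ ^ 2) := by
  by_cases hc : (⟪ψ, φ⟫ : ℂ) = 0
  · exact helstrom_core ψ φ hψ hφ E hE hE0 hE1 (by rw [hc]; simp)
  · set c : ℂ := ⟪ψ, φ⟫ with hcdef
    set z : ℂ := (starRingEnd ℂ) c / (‖c‖ : ℂ) with hz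
    have hcn : (‖c‖ : ℂ) ≠ 0 := by
      simp only [ne_eq, Complex.ofReal_eq_zero, norm_eq_zero]; exact hc
    have hznorm : ‖z‖ = 1 := by
      rw [hz, norm_div]
      simp only [RCLike.norm_conj, Complex.norm_real, norm_norm]
      rw [div_self (norm_ne_zero_iff.mpr hc)]
    set φ' : H := z • φ with hφ'
    have hφ'n : ‖φ'‖ = 1 := by rw [hφ', norm_smul, hznorm, hφ]; ring
    have hip : (⟪ψ, φ'⟫ : ℂ) = (‖c‖ : ℂ) := by
      rw [hφ', inner_smul_right, ← hcdef, hz, div_mul_eq_mul_div, Complex.conj_mul',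
        sq, mul_div_assoc, div_self hcn, mul_one]
    have him : (⟪ψ, φ'⟫ : ℂ).im = 0 := by rw [hip]; simp
    have hEφ' : (⟪φ', E φ'⟫ : ℂ).re = (⟪φ, E φ⟫ : ℂ).re := by
      rw [hφ', map_smul, inner_smul_left, inner_smul_right, ← mul_assoc,
        Complex.conj_mul', hznorm]
      norm_num
    have h := helstrom_core ψ φ' hψ hφ'n E hE hE0 hE1 him
    rw [hEφ'] at h
    have hn : ‖(⟪ψ, φ'⟫ : ℂ)‖ = ‖c‖ := by rw [hip]; simp
    rw [hn] at h
    exact h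
end

section
/- Let H be a complex Hilbert space, let ψ and φ be unit vectors in H, and let E : H → H be a continuous linear self-adjoint operator satisfying 0 ≤ re⟨x, E x⟩ ≤ ‖x‖² for all x ∈ H. Then the error probability of the discrimination strategy defined by E satisfies (1/2)·((1 − re⟨ψ, E ψ⟩) + re⟨φ, E φ⟩) ≥ (1/2)·(1 − √(1 − |⟨ψ, φ⟩|²)). -/
open scoped ComplexInnerProductSpace

/-- Cauchy–Schwarz for the positive sesquilinear form `(x, y) ↦ ⟪x, T y⟫` of a positive
self-adjoint operator. -/
lemma pos_op_cauchy_schwarz {H : Type*} [NormedAddCommGroup H] [InnerProductSpace ℂ H]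
    [CompleteSpace H] (T : H →L[ℂ] H) (hT : IsSelfAdjoint T)
    (h0 : ∀ x : H, 0 ≤ (⟪x, T x⟫).re) (x y : H) :
    ‖⟪x, T y⟫‖ ^ 2 ≤ (⟪x, T x⟫).re * (⟪y, T y⟫).re := by
  have hsym := (ContinuousLinearMap.isSelfAdjoint_iff_isSymmetric).mp hT
  letI c : PreInnerProductSpace.Core ℂ H :=
    { inner := fun a b => ⟪a, T b⟫
      conj_inner_symm := fun a b => by
        simpa [inner_conj_symm] using (congrArg (starRingEnd ℂ) (hsym b a)).symm
      re_inner_nonneg := h0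
      add_left := fun a b z => inner_add_left a b (T z)
      smul_left := fun a b r => inner_smul_left a (T b) r }
  have h := @InnerProductSpace.Core.inner_mul_inner_self_le ℂ H _ _ _ c x y
  have hxy : (c.inner y x) = starRingEnd ℂ (c.inner x y) := (c.conj_inner_symm y x).symm
  have hnn : ‖c.inner x y‖ * ‖c.inner y x‖ = ‖⟪x, T y⟫‖ ^ 2 := by
    rw [hxy, RCLike.norm_conj, sq]
    rfl
  rw [hnn] at h
  exact h

/-- Helstrom bound: the error probability of any two-outcome measurement `0 ≤ E ≤ 1`
at discriminating the equally likely pure states `ψ` and `φ` is at least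
`(1/2)(1 − √(1 − |⟨ψ, φ⟩|²))`. -/
theorem helstrom_error_bound
    {H : Type*} [NormedAddCommGroup H] [InnerProductSpace ℂ H] [CompleteSpace H]
    (ψ φ : H) (hψ : ‖ψ‖ = 1) (hφ : ‖φ‖ = 1)
    (E : H →L[ℂ] H) (hE : IsSelfAdjoint E)
    (hE0 : ∀ x : H, 0 ≤ (⟪x, E x⟫).re)
    (hE1 : ∀ x : H, (⟪x, E x⟫).re ≤ ‖x‖ ^ 2) :
    (1 / 2 : ℝ) * ((1 - (⟪ψ, E ψ⟫).re) + (⟪φ, E φ⟫).re)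
      ≥ (1 / 2 : ℝ) * (1 - Real.sqrt (1 - ‖⟪ψ, φ⟫‖ ^ 2)) := by
  set a := (⟪ψ, E ψ⟫).re with ha
  set b := (⟪φ, E φ⟫).re with hb
  set F : H →L[ℂ] H := 1 - E with hF
  have hFsa : IsSelfAdjoint F := (IsSelfAdjoint.one (H →L[ℂ] H)).sub hE
  have hFinner : ∀ x : H, (⟪x, F x⟫).re = ‖x‖ ^ 2 - (⟪x, E x⟫).re := by
    intro x
    simp only [hF, ContinuousLinearMap.sub_apply, ContinuousLinearMap.one_apply,
      inner_sub_right, Complex.sub_re, inner_self_eq_norm_sq_to_K (𝕜 := ℂ) x]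
    norm_cast
  have hF0 : ∀ x : H, 0 ≤ (⟪x, F x⟫).re := fun x => by
    rw [hFinner x]; linarith [hE1 x]
  -- Cauchy-Schwarz for E and F
  have hcsE := pos_op_cauchy_schwarz E hE hE0 ψ φ
  have hcsF := pos_op_cauchy_schwarz F hFsa hF0 ψ φ
  rw [hFinner ψ, hFinner φ, hψ, hφ] at hcsF
  simp only [one_pow] at hcsF
  -- split the inner product
  have hsplit : ⟪ψ, φ⟫ = ⟪ψ, E φ⟫ + ⟪ψ, F φ⟫ := by
    rw [← inner_add_right]
    congr 1
    simp [hF]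
  have hnorm : ‖⟪ψ, φ⟫‖ ≤ ‖⟪ψ, E φ⟫‖ + ‖⟪ψ, F φ⟫‖ := hsplit ▸ norm_add_le _ _
  have ha0 : 0 ≤ a := hE0 ψ
  have hb0 : 0 ≤ b := hE0 φ
  have ha1 : a ≤ 1 := by have := hE1 ψ; rwa [hψ, one_pow] at this
  have hb1 : b ≤ 1 := by have := hE1 φ; rwa [hφ, one_pow] at this
  -- real algebra
  set c := ‖⟪ψ, φ⟫‖ with hc
  have hc0 : 0 ≤ c := norm_nonneg _
  have key : c ^ 2 ≤ 1 - (a - b) ^ 2 := by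
    set u := Real.sqrt (a * (1 - a)) with hu
    set v := Real.sqrt (b * (1 - b)) with hv
    have hu2 : u ^ 2 = a * (1 - a) := Real.sq_sqrt (by nlinarith)
    have hv2 : v ^ 2 = b * (1 - b) := Real.sq_sqrt (by nlinarith)
    have hE' : ‖⟪ψ, E φ⟫‖ ≤ Real.sqrt (a * b) := by
      rw [← Real.sqrt_sq (norm_nonneg ⟪ψ, E φ⟫)]
      exact Real.sqrt_le_sqrt hcsE
    have hF' : ‖⟪ψ, F φ⟫‖ ≤ Real.sqrt ((1 - a) * (1 - b)) := by
      rw [← Real.sqrt_sq (norm_nonneg ⟪ψ, F φ⟫)]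
      exact Real.sqrt_le_sqrt hcsF
    have hcle : c ≤ Real.sqrt (a * b) + Real.sqrt ((1 - a) * (1 - b)) := by
      calc c ≤ ‖⟪ψ, E φ⟫‖ + ‖⟪ψ, F φ⟫‖ := hnorm
        _ ≤ _ := add_le_add hE' hF'
    have hs2 : Real.sqrt (a * b) ^ 2 = a * b := Real.sq_sqrt (by nlinarith)
    have ht2 : Real.sqrt ((1 - a) * (1 - b)) ^ 2 = (1 - a) * (1 - b) :=
      Real.sq_sqrt (by nlinarith)
    have hst : Real.sqrt (a * b) * Real.sqrt ((1 - a) * (1 - b)) = u * v := by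
      rw [hu, hv, ← Real.sqrt_mul (by nlinarith), ← Real.sqrt_mul (by nlinarith)]
      ring_nf
    have huv : 2 * (u * v) ≤ u ^ 2 + v ^ 2 := by nlinarith [sq_nonneg (u - v)]
    have hsq : c ^ 2 ≤ (Real.sqrt (a * b) + Real.sqrt ((1 - a) * (1 - b))) ^ 2 :=
      pow_le_pow_left₀ hc0 hcle 2
    have hexp : (Real.sqrt (a * b) + Real.sqrt ((1 - a) * (1 - b))) ^ 2
        = a * b + (1 - a) * (1 - b) + 2 * (u * v) := by
      rw [add_sq, hs2, ht2, mul_assoc, hst]; ring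
    rw [hexp] at hsq
    have h1 : a * b + (1 - a) * (1 - b) + (u ^ 2 + v ^ 2) = 1 - (a - b) ^ 2 := by
      rw [hu2, hv2]; ring
    linarith
  have hfinal : a - b ≤ Real.sqrt (1 - c ^ 2) := by
    rcases le_or_gt (a - b) 0 with h | h
    · exact h.trans (Real.sqrt_nonneg _)
    · rw [show (a - b) = Real.sqrt ((a - b) ^ 2) from (Real.sqrt_sq h.le).symm]
      exact Real.sqrt_le_sqrt (by linarith)
  linarith
end

section
/- Let H be a complex Hilbert space and let ψ and φ be unit vectors in H. Then there exists an orthogonal projection E : H → H such that (1/2)·((1 − re⟨ψ, E ψ⟩) + re⟨φ, E φ⟩) = (1/2)·(1 − √(1 − |⟨ψ, φ⟩|²)). -/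
open scoped ComplexInnerProductSpace

/-- The Helstrom bound is achieved: there is an orthogonal projection (a self-adjoint
idempotent) `E` whose discrimination error probability for the equally likely pure
states `ψ` and `φ` equals `(1/2)(1 − √(1 − |⟨ψ, φ⟩|²))`. -/
theorem helstrom_measurement_exists
    {H : Type*} [NormedAddCommGroup H] [InnerProductSpace ℂ H] [CompleteSpace H]
    (ψ φ : H) (hψ : ‖ψ‖ = 1) (hφ : ‖φ‖ = 1) :
    ∃ E : H →L[ℂ] H, IsSelfAdjoint E ∧ E ∘L E = E ∧
      (1 / 2 : ℝ) * ((1 - (⟪ψ, E ψ⟫).re) + (⟪φ, E φ⟫).re)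
        = (1 / 2 : ℝ) * (1 - Real.sqrt (1 - ‖⟪ψ, φ⟫‖ ^ 2)) := by
  set s : ℂ := ⟪ψ, φ⟫ with hs
  set c : ℝ := ‖s‖ with hc
  have hc0 : 0 ≤ c := norm_nonneg _
  have hc1 : c ≤ 1 := by
    have := norm_inner_le_norm (𝕜 := ℂ) ψ φ
    rwa [hψ, hφ, mul_one] at this
  by_cases hcase : c = 1
  · refine ⟨0, .zero _, by ext x; simp, ?_⟩
    simp [hcase]
  -- main case: c < 1
  have hclt : c < 1 := lt_of_le_of_ne hc1 hcase
  have hc2 : 0 < 1 - c ^ 2 := by nlinarith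
  set t : ℝ := Real.sqrt (1 - c ^ 2) with htdef
  have ht0 : 0 < t := Real.sqrt_pos.mpr hc2
  have ht2 : t ^ 2 = 1 - c ^ 2 := Real.sq_sqrt hc2.le
  have ht1 : t ≤ 1 := by nlinarith [Real.sqrt_nonneg (1 - c ^ 2)]
  set a : ℝ := Real.sqrt ((1 + t) / 2) with hadef
  set b : ℝ := Real.sqrt ((1 - t) / 2) with hbdef
  have ha2 : a ^ 2 = (1 + t) / 2 := Real.sq_sqrt (by linarith)
  have hb2 : b ^ 2 = (1 - t) / 2 := Real.sq_sqrt (by linarith)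
  have ha0 : 0 ≤ a := Real.sqrt_nonneg _
  have hb0 : 0 ≤ b := Real.sqrt_nonneg _
  have hacb : a * c = b * (1 + t) := by
    have h : (a * c) ^ 2 = (b * (1 + t)) ^ 2 := by
      rw [mul_pow, mul_pow, ha2, hb2]; nlinarith
    have h1 : 0 ≤ a * c := mul_nonneg ha0 hc0
    have h2 : 0 ≤ b * (1 + t) := mul_nonneg hb0 (by linarith)
    calc a * c = Real.sqrt ((a*c)^2) := (Real.sqrt_sq h1).symm
      _ = Real.sqrt ((b*(1+t))^2) := by rw [h]
      _ = b * (1 + t) := Real.sqrt_sq h2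
  -- orthogonal complement direction
  set x : H := φ - s • ψ with hxdef
  have hpp : ⟪ψ, ψ⟫ = (1 : ℂ) := by
    rw [inner_self_eq_norm_sq_to_K, hψ]; norm_num
  have hff : ⟪φ, φ⟫ = (1 : ℂ) := by
    rw [inner_self_eq_norm_sq_to_K, hφ]; norm_num
  have hfp : ⟪φ, ψ⟫ = starRingEnd ℂ s := by rw [← inner_conj_symm]
  have hss : starRingEnd ℂ s * s = ((c ^ 2 : ℝ) : ℂ) := by
    rw [← Complex.normSq_eq_conj_mul_self, hc, Complex.sq_norm]
  have hpx : ⟪ψ, x⟫ = 0 := by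
    simp [hxdef, inner_sub_right, inner_smul_right, hpp, ← hs, hψ]
  have hxp : ⟪x, ψ⟫ = 0 := by
    rw [← inner_conj_symm, hpx]; simp
  have hxf : ⟪x, φ⟫ = ((1 - c ^ 2 : ℝ) : ℂ) := by
    simp only [hxdef, inner_sub_left, inner_smul_left, hff, ← hs, hss]
    push_cast; ring
  have hxx : ⟪x, x⟫ = ((1 - c ^ 2 : ℝ) : ℂ) := by
    nth_rewrite 2 [hxdef]
    simp only [inner_sub_right, inner_smul_right, hxp, hxf, mul_zero, sub_zero]
  have hab1 : a ^ 2 + b ^ 2 = 1 := by rw [ha2, hb2]; ring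
  -- the phase
  set ω : ℂ := if s = 0 then 1 else s / (c : ℂ) with hωdef
  have hωc : ω * (c : ℂ) = s := by
    by_cases h0 : s = 0
    · have : c = 0 := by rw [hc, h0, norm_zero]
      simp [hωdef, h0, this]
    · have hcne : (c : ℂ) ≠ 0 := by
        simpa [hc] using norm_ne_zero_iff.mpr h0
      rw [hωdef, if_neg h0]; field_simp
  have hωω : starRingEnd ℂ ω * ω = 1 := by
    by_cases h0 : s = 0
    · simp [hωdef, h0]
    · have hcne : (c : ℂ) ≠ 0 := by
        simpa [hc] using norm_ne_zero_iff.mpr h0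
      rw [hωdef, if_neg h0]
      rw [map_div₀]
      have : starRingEnd ℂ (c : ℂ) = (c : ℂ) := Complex.conj_ofReal c
      rw [this]
      field_simp
      rw [hss]; push_cast; ring
  have htne : (t : ℂ) ≠ 0 := by
    exact_mod_cast Complex.ofReal_ne_zero.mpr ht0.ne'
  set β : ℂ := -(starRingEnd ℂ ω) * (b : ℂ) / (t : ℂ) with hβdef
  set u : H := (a : ℂ) • ψ + β • x with hudef
  have hβconj : starRingEnd ℂ β = -ω * (b : ℂ) / (t : ℂ) := by
    rw [hβdef]; rw [map_div₀, map_mul, map_neg]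
    simp [Complex.conj_ofReal]
  have huψ : ⟪u, ψ⟫ = (a : ℂ) := by
    simp only [hudef, inner_add_left, inner_smul_left, hpp, hxp, mul_zero, add_zero,
      mul_one, Complex.conj_ofReal]
  have hc2c : ((1 - c ^ 2 : ℝ) : ℂ) = (t : ℂ) ^ 2 := by
    rw [← ht2]; push_cast; ring
  have huu : ⟪u, u⟫ = 1 := by
    simp only [hudef, inner_add_left, inner_add_right, inner_smul_left, inner_smul_right,
      hpp, hpx, hxp, hxx, mul_zero, mul_one, add_zero, zero_add, Complex.conj_ofReal,
      hβconj, hβdef, hc2c]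
    simp only [map_neg, map_div₀, map_mul, Complex.conj_conj, Complex.conj_ofReal]
    field_simp
    have habC : ((a : ℂ))^2 + ((b : ℂ))^2 = 1 := by exact_mod_cast congrArg Complex.ofReal hab1
    linear_combination ((b:ℂ)^2) * hωω + habC
  have huφ : ⟪u, φ⟫ = ω * (b : ℂ) := by
    simp only [hudef, inner_add_left, inner_smul_left, ← hs, hxf, Complex.conj_ofReal,
      hβconj, hc2c]
    rw [← hωc]
    have hacbC : (a : ℂ) * (c : ℂ) = (b : ℂ) * (1 + (t : ℂ)) := by
      exact_mod_cast congrArg Complex.ofReal hacb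
    field_simp
    linear_combination ω * hacbC
  refine ⟨(innerSL ℂ u).smulRight u, ?_, ?_, ?_⟩
  · rw [ContinuousLinearMap.isSelfAdjoint_iff_isSymmetric]
    intro z w
    simp [inner_smul_left, inner_smul_right]
    rw [← inner_conj_symm z u]
    ring
  · ext z
    simp only [ContinuousLinearMap.coe_comp', Function.comp_apply,
      ContinuousLinearMap.smulRight_apply, innerSL_apply_apply, inner_smul_right, huu, mul_one]
  · have e1 : ⟪ψ, ((innerSL ℂ u).smulRight u) ψ⟫ = ((a : ℂ))^2 := by
      simp only [ContinuousLinearMap.smulRight_apply, innerSL_apply_apply, inner_smul_right, huψ]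
      rw [← inner_conj_symm ψ u, huψ, Complex.conj_ofReal]; ring
    have e2 : ⟪φ, ((innerSL ℂ u).smulRight u) φ⟫ = ((b : ℂ))^2 := by
      simp only [ContinuousLinearMap.smulRight_apply, innerSL_apply_apply, inner_smul_right, huφ]
      rw [← inner_conj_symm φ u, huφ]
      rw [map_mul, Complex.conj_ofReal]
      linear_combination (b : ℂ)^2 * hωω
    rw [e1, e2]
    have r1 : (((a : ℂ))^2).re = a ^ 2 := by norm_cast
    have r2 : (((b : ℂ))^2).re = b ^ 2 := by norm_cast
    rw [r1, r2]
    rw [ha2, hb2]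
    ring
end

section
/- Let d be a positive natural number, let p : Fin d → ℝ be a probability distribution (p j ≥ 0 for all j and ∑_j p j = 1), and let k_max be an index at which p attains its maximum. Then ∑_{j ≠ k_max} p j / √(1 − p j) ≤ √2 · (1 − p k_max). -/
/-- Non-maximal contribution to the expected oracle-call count of amplitude-amplified
coherence detection: `∑_{j ≠ k_max} p j / √(1 − p j) ≤ √2 · (1 − p k_max)`. -/
theorem nonmax_oracle_calls_bound
    (d : ℕ) (hd : 0 < d) (p : Fin d → ℝ)
    (hp0 : ∀ j, 0 ≤ p j) (hp1 : ∑ j : Fin d, p j = 1)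
    (kmax : Fin d) (hmax : ∀ j, p j ≤ p kmax) :
    ∑ j ∈ Finset.univ.erase kmax, p j / Real.sqrt (1 - p j)
      ≤ Real.sqrt 2 * (1 - p kmax) := by
  have hsum : ∑ j ∈ Finset.univ.erase kmax, p j = 1 - p kmax := by
    have h := Finset.add_sum_erase Finset.univ p (Finset.mem_univ kmax)
    rw [hp1] at h
    linarith
  have key : ∀ j ∈ Finset.univ.erase kmax, p j / Real.sqrt (1 - p j)
      ≤ Real.sqrt 2 * p j := by
    intro j hj
    have hjne : j ≠ kmax := Finset.ne_of_mem_erase hj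
    have hpair : p j + p kmax ≤ 1 := by
      have h1 : p kmax + ∑ i ∈ Finset.univ.erase kmax, p i = 1 := by
        rw [Finset.add_sum_erase Finset.univ p (Finset.mem_univ kmax), hp1]
      have h2 : p j ≤ ∑ i ∈ Finset.univ.erase kmax, p i :=
        Finset.single_le_sum (fun i _ => hp0 i)
          (Finset.mem_erase.mpr ⟨hjne, Finset.mem_univ j⟩)
      linarith
    have hhalf : p j ≤ 1 / 2 := by linarith [hmax j]
    have hge : (1:ℝ)/2 ≤ 1 - p j := by linarith
    have hsq : Real.sqrt (1/2) ≤ Real.sqrt (1 - p j) := Real.sqrt_le_sqrt hge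
    have hsqpos : 0 < Real.sqrt (1/2) := Real.sqrt_pos.mpr (by norm_num)
    have hdiv : p j / Real.sqrt (1 - p j) ≤ p j / Real.sqrt (1/2) :=
      div_le_div_of_nonneg_left (hp0 j) hsqpos hsq
    have hsqrt2 : Real.sqrt (1/2) = 1 / Real.sqrt 2 := by
      rw [eq_div_iff (by positivity), ← Real.sqrt_mul (by norm_num)]
      norm_num
    calc p j / Real.sqrt (1 - p j) ≤ p j / Real.sqrt (1/2) := hdiv
      _ = Real.sqrt 2 * p j := by
          rw [hsqrt2]; field_simp
  calc ∑ j ∈ Finset.univ.erase kmax, p j / Real.sqrt (1 - p j)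
      ≤ ∑ j ∈ Finset.univ.erase kmax, Real.sqrt 2 * p j := Finset.sum_le_sum key
    _ = Real.sqrt 2 * (1 - p kmax) := by rw [← Finset.mul_sum, hsum]
end

section
/- Let d be a positive natural number, let p : Fin d → ℝ be a probability distribution (p j ≥ 0 for all j and ∑_j p j = 1), let k_max be an index at which p attains its maximum, and set c = 1 − p k_max, assuming c > 0. Then ∑_{k : Fin d} p k / √(1 − p k) ≤ 1/√c + 1 + √2. -/
/-- Expected oracle-call count of amplitude-amplified coherence detection:
`∑_k p k / √(1 − p k) ≤ 1/√c + 1 + √2` where `c = 1 − p k_max` is the geometric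
measure of coherence. -/
theorem total_oracle_calls_bound
    (d : ℕ) (hd : 0 < d) (p : Fin d → ℝ)
    (hp0 : ∀ j, 0 ≤ p j) (hp1 : ∑ j : Fin d, p j = 1)
    (kmax : Fin d) (hmax : ∀ j, p j ≤ p kmax)
    (c : ℝ) (hc : c = 1 - p kmax) (hc0 : 0 < c) :
    ∑ k : Fin d, p k / Real.sqrt (1 - p k)
      ≤ 1 / Real.sqrt c + 1 + Real.sqrt 2 := by
  have hsum_erase : ∑ k ∈ Finset.univ.erase kmax, p k = c := by
    rw [Finset.sum_erase_eq_sub (Finset.mem_univ kmax), hp1, hc]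
  have hc1 : c ≤ 1 := by
    rw [hc]; linarith [hp0 kmax]
  -- each non-max probability is at most 1/2
  have hhalf : ∀ k ∈ Finset.univ.erase kmax, p k ≤ 1 / 2 := by
    intro k hk
    have h1 : p k ≤ c := by
      rw [← hsum_erase]
      exact Finset.single_le_sum (fun j _ => hp0 j) hk
    have h2 : p k ≤ p kmax := hmax k
    rw [hc] at h1
    linarith
  have hsqrt2 : (0:ℝ) ≤ Real.sqrt 2 := Real.sqrt_nonneg 2
  have hkey : ∀ k ∈ Finset.univ.erase kmax,
      p k / Real.sqrt (1 - p k) ≤ Real.sqrt 2 * p k := by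
    intro k hk
    have hpk := hp0 k
    have h12 : (1:ℝ)/2 ≤ 1 - p k := by linarith [hhalf k hk]
    have hs : Real.sqrt (1/2) ≤ Real.sqrt (1 - p k) := Real.sqrt_le_sqrt h12
    have hspos : 0 < Real.sqrt (1 - p k) := by
      apply Real.sqrt_pos.mpr; linarith
    have hmul : Real.sqrt 2 * Real.sqrt (1/2) = 1 := by
      rw [← Real.sqrt_mul (by norm_num : (0:ℝ) ≤ 2)]
      norm_num
    rw [div_le_iff₀ hspos]
    nlinarith [mul_le_mul_of_nonneg_left hs hpk]
  have hsum2 : ∑ k ∈ Finset.univ.erase kmax, p k / Real.sqrt (1 - p k)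
      ≤ Real.sqrt 2 * c := by
    calc ∑ k ∈ Finset.univ.erase kmax, p k / Real.sqrt (1 - p k)
        ≤ ∑ k ∈ Finset.univ.erase kmax, Real.sqrt 2 * p k :=
          Finset.sum_le_sum hkey
      _ = Real.sqrt 2 * c := by rw [← Finset.mul_sum, hsum_erase]
  have hscpos : 0 < Real.sqrt c := Real.sqrt_pos.mpr hc0
  have hmaxterm : p kmax / Real.sqrt (1 - p kmax) ≤ 1 / Real.sqrt c := by
    have : (1:ℝ) - p kmax = c := by linarith
    rw [this]
    gcongr
    linarith
  rw [← Finset.add_sum_erase Finset.univ (fun k => p k / Real.sqrt (1 - p k))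
    (Finset.mem_univ kmax)]
  have h2c : Real.sqrt 2 * c ≤ 1 + Real.sqrt 2 := by nlinarith
  linarith
end

section
/- Let H be a complex inner product space and let ψ and φ be unit vectors in H with |⟨ψ, φ⟩| < 1. Then the linear operator P_ψ − P_φ has both √(1 − |⟨ψ, φ⟩|²) and −√(1 − |⟨ψ, φ⟩|²) as eigenvalues. -/
open scoped ComplexInnerProductSpace

/-- The difference `P_ψ − P_φ` of the rank-one projections onto two unit vectors with
`|⟨ψ, φ⟩| < 1` has eigenvalues `±√(1 − |⟨ψ, φ⟩|²)`. -/
theorem proj_diff_eigenvalues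
    {H : Type*} [NormedAddCommGroup H] [InnerProductSpace ℂ H]
    (ψ φ : H) (hψ : ‖ψ‖ = 1) (hφ : ‖φ‖ = 1) (hover : ‖⟪ψ, φ⟫‖ < 1)
    (T : H →ₗ[ℂ] H)
    (hT : ∀ x : H, T x = ⟪ψ, x⟫ • ψ - ⟪φ, x⟫ • φ) :
    Module.End.HasEigenvalue T (Real.sqrt (1 - ‖⟪ψ, φ⟫‖ ^ 2) : ℂ) ∧
      Module.End.HasEigenvalue T (-(Real.sqrt (1 - ‖⟪ψ, φ⟫‖ ^ 2) : ℂ)) := by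
  set c : ℂ := ⟪ψ, φ⟫ with hc
  set L : ℝ := Real.sqrt (1 - ‖c‖ ^ 2) with hL
  have hnorm : ‖c‖ ^ 2 < 1 := by nlinarith [norm_nonneg c]
  have hL2 : L ^ 2 = 1 - ‖c‖ ^ 2 := Real.sq_sqrt (by linarith)
  have hLpos : 0 < L := Real.sqrt_pos.2 (by linarith)
  set μ : ℂ := (L : ℂ) with hμ
  have hμpos : μ ≠ 0 := by
    simp [hμ, Complex.ofReal_eq_zero]; positivity
  have hμ1 : μ + 1 ≠ 0 := by
    intro h
    have : (L : ℂ) = -1 := by linear_combination h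
    have : L = -1 := by exact_mod_cast this
    linarith
  have hψψ : ⟪ψ, ψ⟫ = 1 := by
    rw [inner_self_eq_norm_sq_to_K, hψ]; norm_num
  have hφφ : ⟪φ, φ⟫ = 1 := by
    rw [inner_self_eq_norm_sq_to_K, hφ]; norm_num
  have hφψ : ⟪φ, ψ⟫ = (starRingEnd ℂ) c := by
    rw [hc, inner_conj_symm]
  have hcc : c * (starRingEnd ℂ) c = (‖c‖ ^ 2 : ℂ) := by
    rw [Complex.mul_conj]
    norm_cast
    rw [Complex.normSq_eq_norm_sq]
  have hμ2 : μ ^ 2 = 1 - c * (starRingEnd ℂ) c := by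
    rw [hcc, hμ]
    exact_mod_cast congrArg Complex.ofReal hL2
  constructor
  · -- eigenvector v = (μ+1) • ψ - conj c • φ
    set v : H := (μ + 1) • ψ - (starRingEnd ℂ) c • φ with hv
    have hiv : ⟪ψ, v⟫ = μ + μ ^ 2 := by
      simp only [hv, inner_sub_right, inner_smul_right, hψψ, ← hc]
      linear_combination -hμ2
    have hiv2 : ⟪φ, v⟫ = μ * (starRingEnd ℂ) c := by
      simp only [hv, inner_sub_right, inner_smul_right, hφψ, hφφ]
      ring
    have hvne : v ≠ 0 := by
      intro h
      have : ⟪ψ, v⟫ = 0 := by rw [h, inner_zero_right]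
      rw [hiv] at this
      have : μ * (1 + μ) = 0 := by linear_combination this
      rcases mul_eq_zero.1 this with h' | h'
      · exact hμpos h'
      · exact hμ1 (by linear_combination h')
    refine Module.End.hasEigenvalue_of_hasEigenvector ⟨?_, hvne⟩
    rw [Module.End.mem_eigenspace_iff, hT, hiv, hiv2, hv]
    module
  · -- eigenvector w = -c • ψ + (μ+1) • φ
    set w : H := (μ + 1) • φ - c • ψ with hw
    have hiw : ⟪φ, w⟫ = μ + μ ^ 2 := by
      simp only [hw, inner_sub_right, inner_smul_right, hφφ, hφψ]
      linear_combination -hμ2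
    have hiw2 : ⟪ψ, w⟫ = μ * c := by
      simp only [hw, inner_sub_right, inner_smul_right, hψψ, ← hc]
      ring
    have hwne : w ≠ 0 := by
      intro h
      have : ⟪φ, w⟫ = 0 := by rw [h, inner_zero_right]
      rw [hiw] at this
      have : μ * (1 + μ) = 0 := by linear_combination this
      rcases mul_eq_zero.1 this with h' | h'
      · exact hμpos h'
      · exact hμ1 (by linear_combination h')
    refine Module.End.hasEigenvalue_of_hasEigenvector ⟨?_, hwne⟩
    rw [Module.End.mem_eigenspace_iff, hT, hiw, hiw2, hw]
    module
end

section
/- Let H be a complex Hilbert space, let e₀ and e₁ be orthonormal vectors in H, let θ be a real number, and let T : H → H be a continuous linear map satisfying T e₀ = cos θ • e₀ + sin θ • e₁, T e₁ = −sin θ • e₀ + cos θ • e₁, and T x = x for every x orthogonal to both e₀ and e₁. Then ‖T − id‖ = 2·|sin(θ/2)|; in particular, if cos θ ≥ 0 then ‖T − id‖ ≤ √2 · √(1 − cos²θ). -/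
open scoped ComplexInnerProductSpace

/-- Norm squared of an orthogonal sum. -/
lemma aux_norm_add_sq_ortho {H : Type*} [NormedAddCommGroup H] [InnerProductSpace ℂ H]
    (u v : H) (h : ⟪u, v⟫ = 0) : ‖u + v‖ ^ 2 = ‖u‖ ^ 2 + ‖v‖ ^ 2 := by
  rw [@norm_add_sq ℂ, h]
  simp

set_option maxHeartbeats 1000000 in
/-- A unitary acting as a rotation by angle `θ` on the plane spanned by the orthonormal
pair `e₀, e₁` and as the identity on its orthogonal complement is at operator-norm
distance `2·|sin(θ/2)|` from the identity; in particular, if `cos θ ≥ 0` this distance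
is at most `√2·√(1 − cos²θ)`. -/
theorem rotation_dist_to_id
    {H : Type*} [NormedAddCommGroup H] [InnerProductSpace ℂ H] [CompleteSpace H]
    (e₀ e₁ : H) (he₀ : ‖e₀‖ = 1) (he₁ : ‖e₁‖ = 1) (hortho : ⟪e₀, e₁⟫ = 0)
    (θ : ℝ) (T : H →L[ℂ] H)
    (hTe₀ : T e₀ = (Real.cos θ : ℂ) • e₀ + (Real.sin θ : ℂ) • e₁)
    (hTe₁ : T e₁ = -(Real.sin θ : ℂ) • e₀ + (Real.cos θ : ℂ) • e₁)
    (hTperp : ∀ x : H, ⟪e₀, x⟫ = 0 → ⟪e₁, x⟫ = 0 → T x = x) :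
    ‖T - ContinuousLinearMap.id ℂ H‖ = 2 * |Real.sin (θ / 2)| ∧
      (0 ≤ Real.cos θ →
        ‖T - ContinuousLinearMap.id ℂ H‖
          ≤ Real.sqrt 2 * Real.sqrt (1 - Real.cos θ ^ 2)) := by
  have hortho' : ⟪e₁, e₀⟫ = 0 := by
    rw [← inner_conj_symm, hortho, map_zero]
  have he₀' : ⟪e₀, e₀⟫ = (1 : ℂ) := by
    rw [inner_self_eq_norm_sq_to_K, he₀]; norm_num
  have he₁' : ⟪e₁, e₁⟫ = (1 : ℂ) := by
    rw [inner_self_eq_norm_sq_to_K, he₁]; norm_num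
  set c := Real.cos θ with hc
  set s := Real.sin θ with hs
  set D : H →L[ℂ] H := T - ContinuousLinearMap.id ℂ H with hD
  -- the two "difference" vectors
  set u : H := ((c - 1 : ℝ) : ℂ) • e₀ + (s : ℂ) • e₁ with hu
  set v : H := (-(s : ℝ) : ℂ) • e₀ + ((c - 1 : ℝ) : ℂ) • e₁ with hv
  have hDe₀ : D e₀ = u := by
    simp only [hD, ContinuousLinearMap.sub_apply, ContinuousLinearMap.id_apply, hTe₀, hu]
    push_cast
    module
  have hDe₁ : D e₁ = v := by
    simp only [hD, ContinuousLinearMap.sub_apply, ContinuousLinearMap.id_apply, hTe₁, hv]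
    push_cast
    module
  have huv : ⟪u, v⟫ = 0 := by
    simp only [hu, hv, inner_add_left, inner_add_right, inner_smul_left, inner_smul_right,
      hortho, hortho', he₀', he₁', Complex.ofReal_sub, Complex.ofReal_one, map_sub, map_one,
      map_neg, Complex.conj_ofReal]
    ring
  have key : (2 : ℝ) - 2 * c = (2 * |Real.sin (θ / 2)|) ^ 2 := by
    have h1 : Real.cos (θ / 2) ^ 2 = 1 / 2 + Real.cos (2 * (θ / 2)) / 2 := Real.cos_sq (θ / 2)
    rw [show 2 * (θ / 2) = θ by ring] at h1
    have h2 := Real.sin_sq_add_cos_sq (θ / 2)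
    rw [mul_pow, sq_abs, hc]
    nlinarith
  have hnu : ‖u‖ ^ 2 = 2 - 2 * c := by
    rw [hu, aux_norm_add_sq_ortho _ _ (by
      rw [inner_smul_left, inner_smul_right, hortho]; ring)]
    simp only [norm_smul, norm_neg, Complex.norm_real, Real.norm_eq_abs, he₀, he₁, mul_one,
      mul_pow, sq_abs]
    nlinarith [Real.sin_sq_add_cos_sq θ]
  have hnv : ‖v‖ ^ 2 = 2 - 2 * c := by
    rw [hv, aux_norm_add_sq_ortho _ _ (by
      rw [inner_smul_left, inner_smul_right, hortho]; ring)]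
    simp only [norm_smul, norm_neg, Complex.norm_real, Real.norm_eq_abs, he₀, he₁, mul_one,
      mul_pow, sq_abs]
    nlinarith [Real.sin_sq_add_cos_sq θ]
  have hbound : ∀ x : H, ‖D x‖ ≤ 2 * |Real.sin (θ / 2)| * ‖x‖ := by
    intro x
    set a : ℂ := ⟪e₀, x⟫ with ha
    set b : ℂ := ⟪e₁, x⟫ with hb
    set y : H := x - a • e₀ - b • e₁ with hy
    have hy₀ : ⟪e₀, y⟫ = 0 := by
      simp [hy, inner_sub_right, inner_smul_right, he₀', hortho, ha, he₀]
    have hy₁ : ⟪e₁, y⟫ = 0 := by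
      simp [hy, inner_sub_right, inner_smul_right, he₁', hortho', hb, he₁]
    have hTy : T y = y := hTperp y hy₀ hy₁
    have hxdec : x = a • e₀ + b • e₁ + y := by simp [hy]
    have hDx : D x = a • u + b • v := by
      rw [← hDe₀, ← hDe₁]
      have : D x = T x - x := by simp [hD]
      rw [this]
      conv_lhs => rw [hxdec]
      rw [map_add, map_add, map_smul, map_smul, hTy]
      simp only [hD, ContinuousLinearMap.sub_apply, ContinuousLinearMap.id_apply]
      module
    have hDx_sq : ‖D x‖ ^ 2 = (‖a‖ ^ 2 + ‖b‖ ^ 2) * (2 - 2 * c) := by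
      rw [hDx, aux_norm_add_sq_ortho _ _ (by
        rw [inner_smul_left, inner_smul_right, huv]; ring)]
      simp only [norm_smul, mul_pow, hnu, hnv]
      ring
    have hx_sq : ‖a‖ ^ 2 + ‖b‖ ^ 2 ≤ ‖x‖ ^ 2 := by
      have h1 : ⟪a • e₀ + b • e₁, y⟫ = 0 := by
        simp [inner_add_left, inner_smul_left, hy₀, hy₁]
      have h2 : ‖x‖ ^ 2 = ‖a • e₀ + b • e₁‖ ^ 2 + ‖y‖ ^ 2 := by
        conv_lhs => rw [hxdec]
        exact aux_norm_add_sq_ortho _ _ h1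
      have h3 : ‖a • e₀ + b • e₁‖ ^ 2 = ‖a‖ ^ 2 + ‖b‖ ^ 2 := by
        rw [aux_norm_add_sq_ortho _ _ (by
          rw [inner_smul_left, inner_smul_right, hortho]; ring)]
        simp [norm_smul, he₀, he₁]
      nlinarith [sq_nonneg ‖y‖]
    have hsq : ‖D x‖ ^ 2 ≤ (2 * |Real.sin (θ / 2)| * ‖x‖) ^ 2 := by
      rw [hDx_sq]
      have h2c : (0 : ℝ) ≤ 2 - 2 * c := by rw [key]; positivity
      calc (‖a‖ ^ 2 + ‖b‖ ^ 2) * (2 - 2 * c) ≤ ‖x‖ ^ 2 * (2 - 2 * c) := by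
            apply mul_le_mul_of_nonneg_right hx_sq h2c
        _ = (2 * |Real.sin (θ / 2)| * ‖x‖) ^ 2 := by rw [mul_pow, ← key]; ring
    calc ‖D x‖ = Real.sqrt (‖D x‖ ^ 2) := by rw [Real.sqrt_sq (norm_nonneg _)]
      _ ≤ Real.sqrt ((2 * |Real.sin (θ / 2)| * ‖x‖) ^ 2) := Real.sqrt_le_sqrt hsq
      _ = 2 * |Real.sin (θ / 2)| * ‖x‖ := Real.sqrt_sq (by positivity)
  have hle : ‖D‖ ≤ 2 * |Real.sin (θ / 2)| :=
    D.opNorm_le_bound (by positivity) hbound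
  have hge : 2 * |Real.sin (θ / 2)| ≤ ‖D‖ := by
    have h1 : ‖D e₀‖ ≤ ‖D‖ * ‖e₀‖ := D.le_opNorm e₀
    rw [he₀, mul_one, hDe₀] at h1
    have h2 : ‖u‖ = 2 * |Real.sin (θ / 2)| := by
      have h3 : ‖u‖ ^ 2 = (2 * |Real.sin (θ / 2)|) ^ 2 := by rw [hnu, key]
      rw [← Real.sqrt_sq (norm_nonneg u), h3, Real.sqrt_sq (by positivity)]
    linarith
  have hmain : ‖D‖ = 2 * |Real.sin (θ / 2)| := le_antisymm hle hge
  refine ⟨hmain, fun hcpos => ?_⟩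
  rw [hmain]
  have h1 : (2 * |Real.sin (θ / 2)|) = Real.sqrt (2 - 2 * c) := by
    rw [key]
    rw [Real.sqrt_sq (by positivity)]
  rw [h1, ← Real.sqrt_mul (by norm_num : (0:ℝ) ≤ 2)]
  apply Real.sqrt_le_sqrt
  have hc1 : c ≤ 1 := Real.cos_le_one θ
  nlinarith
end
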